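/- Let N ≥ 1, n, k, l ∈ ℤ, and let p_1,…,p_N, p̄_1,…,p̄_N, a, b, ξ_{10},…,ξ_{N0}, ξ̄_{10},…,ξ̄_{N0} ∈ ℂ satisfy p_i + p̄_j ≠ 0 for all i,j, p_i ∉ {0, a, b}, and p̄_j ∉ {0, −a, −b}. Then the Gram-type tau functions τ_{nkl}, viewed as smooth functions of the real variables (x_1, x_{-1}) (with t_a, t_b fixed), satisfy the bilinear equation ((1/2) D_{x_1} D_{x_{-1}} − 1) τ_{nkl} · τ_{nkl} = − τ_{n+1,kl} · τ_{n-1,kl}, i.e. ∂_{x_1}∂_{x_{-1}}τ_{nkl} · τ_{nkl} − ∂_{x_1}τ_{nkl} · ∂_{x_{-1}}τ_{nkl} − τ_{nkl}² = − τ_{n+1,kl} τ_{n-1,kl}. -/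

import Mathlib

set_option linter.unusedSectionVars false
set_option linter.unnecessarySimpa false
set_option linter.unusedVariables false
set_option maxHeartbeats 2000000
open Matrix BigOperators Finset


noncomputable section

/-- The phase `ξ_i = x_{-1}/p_i + p_i x_1 + t_a/(p_i − a) + t_b/(p_i − b) + ξ_{i0}`. -/
def xiph {N : ℕ} (p : Fin N → ℂ) (a b : ℂ) (xi0 : Fin N → ℂ) (i : Fin N)
    (x1 xm1 ta tb : ℝ) : ℂ :=
  (xm1 : ℂ) / p i + p i * (x1 : ℂ) + (ta : ℂ) / (p i - a) + (tb : ℂ) / (p i - b) + xi0 i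

/-- The phase `ξ̄_j = x_{-1}/p̄_j + p̄_j x_1 + t_a/(p̄_j + a) + t_b/(p̄_j + b) + ξ̄_{j0}`. -/
def xibph {N : ℕ} (pb : Fin N → ℂ) (a b : ℂ) (xib0 : Fin N → ℂ) (j : Fin N)
    (x1 xm1 ta tb : ℝ) : ℂ :=
  (xm1 : ℂ) / pb j + pb j * (x1 : ℂ) + (ta : ℂ) / (pb j + a) + (tb : ℂ) / (pb j + b) + xib0 j

/-- `φ_i^{nkl} = p_i^n (p_i − a)^k (p_i − b)^l e^{ξ_i}`. -/
def phifn {N : ℕ} (p : Fin N → ℂ) (a b : ℂ) (xi0 : Fin N → ℂ) (n k l : ℤ) (i : Fin N)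
    (x1 xm1 ta tb : ℝ) : ℂ :=
  p i ^ n * (p i - a) ^ k * (p i - b) ^ l * Complex.exp (xiph p a b xi0 i x1 xm1 ta tb)

/-- `ψ_j^{nkl} = (−1/p̄_j)^n (−1/(p̄_j + a))^k (−1/(p̄_j + b))^l e^{ξ̄_j}`. -/
def psifn {N : ℕ} (pb : Fin N → ℂ) (a b : ℂ) (xib0 : Fin N → ℂ) (n k l : ℤ) (j : Fin N)
    (x1 xm1 ta tb : ℝ) : ℂ :=
  (-1 / pb j) ^ n * (-1 / (pb j + a)) ^ k * (-1 / (pb j + b)) ^ l *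
    Complex.exp (xibph pb a b xib0 j x1 xm1 ta tb)

/-- The Gram-type tau function `τ_{nkl} = det(δ_{ij} + φ_i ψ_j/(p_i + p̄_j))`. -/
def tauf {N : ℕ} (p pb : Fin N → ℂ) (a b : ℂ) (xi0 xib0 : Fin N → ℂ) (n k l : ℤ)
    (x1 xm1 ta tb : ℝ) : ℂ :=
  Matrix.det (Matrix.of fun i j : Fin N =>
    (if i = j then (1 : ℂ) else 0) +
      phifn p a b xi0 n k l i x1 xm1 ta tb * psifn pb a b xib0 n k l j x1 xm1 ta tb
        / (p i + pb j))

/-! ### Auxiliary determinant algebra -/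

section DetAlgebra

variable {m : Type*} [Fintype m] [DecidableEq m]

lemma myUpdateRow_comm (A : Matrix m m ℂ) {i j : m} (hij : i ≠ j) (x y : m → ℂ) :
    updateRow (updateRow A i x) j y = updateRow (updateRow A j y) i x := by
  ext r c
  rcases eq_or_ne r i with rfl | hri <;> rcases eq_or_ne r j with h | hrj
  · exact absurd h hij
  all_goals simp_all [updateRow_apply]

lemma myUpdateRow_idem (A : Matrix m m ℂ) (r : m) (v w : m → ℂ) :
    updateRow (updateRow A r v) r w = updateRow A r w := by
  ext s c; by_cases h : s = r <;> simp [h]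

lemma myUpdateRow_mul (A B : Matrix m m ℂ) (r : m) (v : m → ℂ) :
    (updateRow A r v) * B = updateRow (A * B) r (v ᵥ* B) := by
  ext s c
  by_cases h : s = r <;>
    simp [h, Matrix.mul_apply, Matrix.vecMul, dotProduct]

lemma smul_vecMul' (c : ℂ) (v : m → ℂ) (B : Matrix m m ℂ) :
    (c • v) ᵥ* B = c • (v ᵥ* B) := by
  funext j; simp [Matrix.vecMul, dotProduct, Finset.mul_sum, mul_assoc]

lemma det_updateRow_expand (A : Matrix m m ℂ) (r : m) (x : m → ℂ) :
    det (updateRow A r x) = ∑ k, x k * det (updateRow A r (Pi.single k 1)) := by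
  have hx : x = ∑ k, x k • (Pi.single k 1 : m → ℂ) := by
    funext c; simp [Pi.single_apply]
  have h := (Matrix.detRowAlternating :
      (m → ℂ) [⋀^m]→ₗ[ℂ] ℂ).toMultilinearMap.map_update_sum Finset.univ r
      (fun k => x k • (Pi.single k 1 : m → ℂ)) A
  conv_lhs => rw [hx]
  exact h.trans (Finset.sum_congr rfl fun k _ => by rw [← Matrix.det_updateRow_smul]; rfl)

lemma detE {i j : m} (hij : i ≠ j) (k l : m) :
    det (updateRow (updateRow (1 : Matrix m m ℂ) i (Pi.single k 1)) j (Pi.single l 1))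
      = (if k = i then (1:ℂ) else 0) * (if l = j then 1 else 0)
        - (if k = j then (1:ℂ) else 0) * (if l = i then 1 else 0) := by
  have hone : ∀ r : m, (1 : Matrix m m ℂ) r = Pi.single r 1 := by
    intro r; funext c; simp [Matrix.one_apply, Pi.single_apply, eq_comm]
  set E := updateRow (updateRow (1 : Matrix m m ℂ) i (Pi.single k 1)) j (Pi.single l 1) with hE
  have hEi : E i = Pi.single k 1 := by rw [hE, updateRow_ne hij, updateRow_self]
  have hEj : E j = Pi.single l 1 := by rw [hE, updateRow_self]
  have hEo : ∀ r, r ≠ i → r ≠ j → E r = Pi.single r 1 := by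
    intro r h1 h2; rw [hE, updateRow_ne h2, updateRow_ne h1, hone]
  by_cases hkl : k = l
  · have hz : det E = 0 :=
      det_zero_of_row_eq hij (hEi.trans (by rw [hkl]; exact hEj.symm))
    rw [hz]
    by_cases hki : k = i <;> by_cases hkj : k = j <;> simp_all
  · by_cases hki : k = i
    · by_cases hlj : l = j
      · have hone' : E = 1 := by
          funext r c
          rcases eq_or_ne r i with rfl | h1
          · rw [hEi, hki, hone]
          · rcases eq_or_ne r j with rfl | h2
            · rw [hEj, hlj, hone]
            · rw [hEo r h1 h2, hone]
        rw [hone', det_one, hki, hlj]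
        simp [hij, Ne.symm hij]
      · have hli : l ≠ i := fun h => hkl (hki.trans h.symm)
        have hz : det E = 0 :=
          det_zero_of_row_eq (Ne.symm hlj) (hEj.trans (hEo l hli hlj).symm)
        rw [hz]; simp [hlj, hli]
    · by_cases hkj : k = j
      · by_cases hli : l = i
        · have hswap : E = ((Equiv.swap i j).permMatrix ℂ) := by
            funext r c
            have hperm : ∀ r c : m, ((Equiv.swap i j).permMatrix ℂ) r c
                = if c = (Equiv.swap i j) r then 1 else 0 := by
              intro r c
              simp [Equiv.Perm.permMatrix, PEquiv.toMatrix_apply, Equiv.toPEquiv_apply, eq_comm]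
            rcases eq_or_ne r i with rfl | h1
            · rw [hEi, hperm, Equiv.swap_apply_left, hkj, Pi.single_apply]
            · rcases eq_or_ne r j with rfl | h2
              · rw [hEj, hperm, Equiv.swap_apply_right, hli, Pi.single_apply]
              · rw [hEo r h1 h2, hperm, Equiv.swap_apply_of_ne_of_ne h1 h2, Pi.single_apply]
          rw [hswap, det_permutation, Equiv.Perm.sign_swap hij]
          simp [hki, hkj, hli, hij]
        · have hlj : l ≠ j := fun h => hkl (hkj.trans h.symm)
          have hz : det E = 0 :=
            det_zero_of_row_eq (Ne.symm hlj) (hEj.trans (hEo l hli hlj).symm)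
          rw [hz]; simp [hli, hlj]
      · have hz : det E = 0 :=
          det_zero_of_row_eq (fun h => hki h.symm : i ≠ k) (hEi.trans (hEo k hki hkj).symm)
        rw [hz]; simp [hki, hkj]

lemma detX {i j : m} (hij : i ≠ j) (x y : m → ℂ) :
    det (updateRow (updateRow (1 : Matrix m m ℂ) i x) j y) = x i * y j - x j * y i := by
  rw [det_updateRow_expand]
  have h1 : ∀ l : m, det (updateRow (updateRow (1 : Matrix m m ℂ) i x) j (Pi.single l 1))
      = ∑ k, x k * det (updateRow (updateRow (1 : Matrix m m ℂ) i (Pi.single k 1)) j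
          (Pi.single l 1)) := by
    intro l
    rw [myUpdateRow_comm _ hij, det_updateRow_expand]
    refine Finset.sum_congr rfl fun k _ => ?_
    rw [myUpdateRow_comm _ (Ne.symm hij)]
  simp_rw [h1, detE hij]
  simp [Finset.mul_sum, mul_sub, Finset.sum_sub_distrib, mul_ite, ite_mul]
  ring

/-- The bilinear form `B(u,w) = ∑_{i,k} u_i w_k cof(A)_{ik}`. -/
def Bform (A : Matrix m m ℂ) (u w : m → ℂ) : ℂ :=
  ∑ i, u i * det (updateRow A i w)

lemma continuous_Bform (u w : m → ℂ) : Continuous fun A : Matrix m m ℂ => Bform A u w := by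
  refine continuous_finset_sum _ fun i _ => Continuous.mul continuous_const ?_
  exact (Continuous.matrix_updateRow i continuous_id continuous_const).matrix_det

lemma sum_det_updateRow_smul (A : Matrix m m ℂ) (u w : m → ℂ) :
    ∑ i, det (updateRow A i (u i • w)) = Bform A u w := by
  simp [Bform, Matrix.det_updateRow_smul]

lemma Bform_inv (A : Matrix m m ℂ) (h : IsUnit A.det) (u w : m → ℂ) :
    Bform A u w = A.det * ((w ᵥ* A⁻¹) ⬝ᵥ u) := by
  have hadj : A.adjugate = A.det • A⁻¹ := by
    rw [Matrix.inv_def, smul_smul, Ring.mul_inverse_cancel _ h, one_smul]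
  have hcr : ∀ i, det (updateRow A i w) = (A.det • (w ᵥ* A⁻¹)) i := by
    intro i
    rw [← Matrix.cramer_transpose_apply, Matrix.cramer_eq_adjugate_mulVec,
      ← Matrix.adjugate_transpose, hadj, Matrix.transpose_smul, Matrix.smul_mulVec,
      Matrix.mulVec_transpose]
  simp only [Bform, hcr, dotProduct, Pi.smul_apply, smul_eq_mul, Finset.mul_sum]
  exact Finset.sum_congr rfl fun i _ => by ring

lemma Bform_neg_right (A : Matrix m m ℂ) (u w : m → ℂ) :
    Bform A u (fun c => -(w c)) = -Bform A u w := by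
  have hneg : (fun c => -(w c)) = ((-1 : ℂ) • w) := by funext c; simp
  have h : ∀ i, updateRow A i (fun c => -(w c)) = updateRow A i ((-1 : ℂ) • w) := by
    intro i; rw [hneg]
  simp only [Bform, h, Matrix.det_updateRow_smul]
  rw [← Finset.sum_neg_distrib]
  exact Finset.sum_congr rfl fun i _ => by ring

/-- Density argument: a continuous function of a complex matrix vanishing at all
invertible matrices vanishes everywhere. -/
lemma eq_zero_of_isUnit_det (f : Matrix m m ℂ → ℂ) (hf : Continuous f)
    (h : ∀ A : Matrix m m ℂ, IsUnit A.det → f A = 0) (A : Matrix m m ℂ) : f A = 0 := by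
  classical
  set q := Matrix.charpoly (-A) with hq
  have hqm : q ≠ 0 := (Matrix.charpoly_monic _).ne_zero
  have heval : ∀ t : ℂ, q.eval t = ((t • (1 : Matrix m m ℂ) + A)).det := by
    intro t
    have h1 : q.eval t = (Polynomial.evalRingHom t) q := rfl
    rw [h1, hq, Matrix.charpoly, RingHom.map_det]
    congr 1
    ext i j
    by_cases hij : i = j
    · subst hij
      simp [Matrix.charmatrix_apply_eq, Matrix.map_apply, Matrix.one_apply]
    · simp [Matrix.charmatrix_apply_ne _ _ _ hij, Matrix.map_apply, Matrix.one_apply, hij]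
  have hfin : {t : ℂ | q.eval t = 0}.Finite := Polynomial.finite_setOf_isRoot hqm
  set g : ℂ → ℂ := fun t => f (t • (1 : Matrix m m ℂ) + A) with hg
  have hgc : Continuous g := by
    apply hf.comp
    exact (continuous_id.smul continuous_const).add continuous_const
  have hg0 : ∀ t : ℂ, q.eval t ≠ 0 → g t = 0 := by
    intro t ht
    exact h _ (isUnit_iff_ne_zero.2 (by rw [← heval]; exact ht))
  have hA : g 0 = f A := by simp [hg]
  have hclosed : IsClosed ({t : ℂ | q.eval t = 0} \ {0}) :=
    (hfin.subset Set.diff_subset).isClosed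
  have hev : ∀ᶠ t in nhdsWithin (0:ℂ) {(0:ℂ)}ᶜ, g t = 0 := by
    have h0 : ({t : ℂ | q.eval t = 0} \ {0})ᶜ ∈ nhds (0:ℂ) :=
      hclosed.isOpen_compl.mem_nhds (by simp)
    filter_upwards [nhdsWithin_le_nhds h0, self_mem_nhdsWithin] with t ht ht0
    refine hg0 t fun hroot => ht ⟨hroot, ht0⟩
  have h1 : Filter.Tendsto g (nhdsWithin (0:ℂ) {(0:ℂ)}ᶜ) (nhds (g 0)) :=
    (hgc.tendsto 0).mono_left nhdsWithin_le_nhds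
  have h2 : Filter.Tendsto g (nhdsWithin (0:ℂ) {(0:ℂ)}ᶜ) (nhds 0) :=
    Filter.Tendsto.congr' (Filter.EventuallyEq.symm hev) tendsto_const_nhds
  rw [← hA]
  exact tendsto_nhds_unique h1 h2

/-- The matrix determinant lemma, in exact (adjugate) form. -/
lemma det_add_vecMulVec (A : Matrix m m ℂ) (u w : m → ℂ) :
    det (A + vecMulVec u w) = det A + Bform A u w := by
  have key : ∀ B : Matrix m m ℂ, IsUnit B.det →
      det (B + vecMulVec u w) - det B - Bform B u w = 0 := by
    intro B hB
    have h1 : B + vecMulVec u w = B * (1 + vecMulVec (B⁻¹ *ᵥ u) w) := by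
      rw [Matrix.mul_add, Matrix.mul_one]
      congr 1
      ext i j
      simp only [Matrix.mul_apply, vecMulVec_apply]
      rw [show ∀ x : m → ℂ, (∑ k, B i k * (x k * w j)) = (∑ k, B i k * x k) * w j from
        fun x => by rw [Finset.sum_mul]; exact Finset.sum_congr rfl fun k _ => by ring]
      congr 1
      have hBB : B *ᵥ (B⁻¹ *ᵥ u) = u := by
        rw [Matrix.mulVec_mulVec, Matrix.mul_nonsing_inv _ hB, Matrix.one_mulVec]
      exact (calc ∑ k, B i k * (B⁻¹ *ᵥ u) k = (B *ᵥ (B⁻¹ *ᵥ u)) i := rfl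
        _ = u i := by rw [hBB]).symm
    have h2 : det (1 + vecMulVec (B⁻¹ *ᵥ u) w) = 1 + w ⬝ᵥ (B⁻¹ *ᵥ u) := by
      rw [Matrix.vecMulVec_eq Unit, Matrix.det_one_add_replicateCol_mul_replicateRow]
    rw [h1, det_mul, h2, Bform_inv B hB u w, dotProduct_mulVec]
    ring
  have := eq_zero_of_isUnit_det
    (fun B => det (B + vecMulVec u w) - det B - Bform B u w)
    (by
      apply Continuous.sub
      apply Continuous.sub
      · exact ((continuous_id.add continuous_const).matrix_det)
      · exact continuous_id.matrix_det
      · exact continuous_Bform u w) key A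
  linear_combination this

/-- The bilinearized Jacobi identity for double row-replacements. -/
lemma jacobi (A : Matrix m m ℂ) (u w u' w' : m → ℂ) :
    A.det * (∑ i, ∑ j, if i = j then 0
        else det (updateRow (updateRow A j (u' j • w')) i (u i • w)))
      = Bform A u w * Bform A u' w' - Bform A u w' * Bform A u' w := by
  have key : ∀ B : Matrix m m ℂ, IsUnit B.det →
      B.det * (∑ i, ∑ j, if i = j then 0
          else det (updateRow (updateRow B j (u' j • w')) i (u i • w)))
        - (Bform B u w * Bform B u' w' - Bform B u w' * Bform B u' w) = 0 := by
    intro B hB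
    have hdB : det B ≠ 0 := by
      intro h0; rw [h0] at hB; simpa using hB
    set aa := w ᵥ* B⁻¹ with haa
    set bb := w' ᵥ* B⁻¹ with hbb
    have hR : ∀ i j : m, i ≠ j →
        det (updateRow (updateRow B j (u' j • w')) i (u i • w))
          = B.det * (u i * u' j * (aa i * bb j - aa j * bb i)) := by
      intro i j hij
      have hmul : (updateRow (updateRow B j (u' j • w')) i (u i • w)) * B⁻¹
          = updateRow (updateRow (B * B⁻¹) j (u' j • bb)) i (u i • aa) := by
        rw [myUpdateRow_mul, myUpdateRow_mul, smul_vecMul', smul_vecMul']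
      have hBB : B * B⁻¹ = 1 := Matrix.mul_nonsing_inv _ hB
      have hdet : det (updateRow (updateRow B j (u' j • w')) i (u i • w)) * det B⁻¹
          = u i * (u' j * (aa i * bb j - aa j * bb i)) := by
        rw [← det_mul, hmul, hBB, Matrix.det_updateRow_smul,
          myUpdateRow_comm _ (Ne.symm hij), Matrix.det_updateRow_smul,
          detX hij]
      have hinv : det (B⁻¹) = (det B)⁻¹ := by
        rw [Matrix.det_nonsing_inv, Ring.inverse_eq_inv']
      rw [hinv] at hdet
      have h2 := congrArg (fun z => z * det B) hdet
      rw [mul_assoc, inv_mul_cancel₀ hdB, mul_one] at h2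
      rw [h2]; ring
    have hsum : (∑ i, ∑ j, if i = j then 0
          else det (updateRow (updateRow B j (u' j • w')) i (u i • w)))
        = ∑ i, ∑ j, B.det * (u i * u' j * (aa i * bb j - aa j * bb i)) := by
      refine Finset.sum_congr rfl fun i _ => Finset.sum_congr rfl fun j _ => ?_
      by_cases hij : i = j
      · subst hij; rw [if_pos rfl]; ring
      · rw [if_neg hij, hR i j hij]
    have main : ∑ i, ∑ j, B.det * (u i * u' j * (aa i * bb j - aa j * bb i))
        = B.det * ((∑ i, aa i * u i) * (∑ j, bb j * u' j)
            - (∑ i, bb i * u i) * (∑ j, aa j * u' j)) := by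
      rw [Finset.sum_mul_sum, Finset.sum_mul_sum, ← Finset.sum_sub_distrib, Finset.mul_sum]
      refine Finset.sum_congr rfl fun i _ => ?_
      rw [← Finset.sum_sub_distrib, Finset.mul_sum]
      refine Finset.sum_congr rfl fun j _ => ?_
      ring
    rw [hsum, main, Bform_inv B hB u w, Bform_inv B hB u' w', Bform_inv B hB u w',
      Bform_inv B hB u' w]
    have hdot : ∀ x y : m → ℂ, x ⬝ᵥ y = ∑ i, x i * y i := fun _ _ => rfl
    rw [hdot, hdot, hdot, hdot]
    simp only [haa, hbb]
    ring
  have hcont : Continuous (fun B : Matrix m m ℂ =>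
      B.det * (∑ i, ∑ j, if i = j then 0
          else det (updateRow (updateRow B j (u' j • w')) i (u i • w)))
        - (Bform B u w * Bform B u' w' - Bform B u w' * Bform B u' w)) := by
    apply Continuous.sub
    · apply Continuous.mul continuous_id.matrix_det
      refine continuous_finset_sum _ fun i _ => continuous_finset_sum _ fun j _ => ?_
      by_cases h : i = j
      · simp only [h, if_pos rfl]; exact continuous_const
      · simp only [if_neg h]
        exact ((Continuous.matrix_updateRow i
          (Continuous.matrix_updateRow j continuous_id continuous_const)
          continuous_const).matrix_det)
    · exact ((continuous_Bform u w).mul (continuous_Bform u' w')).sub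
        ((continuous_Bform u w').mul (continuous_Bform u' w))
  have := eq_zero_of_isUnit_det _ hcont key A
  linear_combination this

/-- Derivative of a determinant with differentiable entries. -/
lemma det_hasDerivAt {A : ℝ → Matrix m m ℂ} {A' : Matrix m m ℂ} {t : ℝ}
    (h : ∀ i j, HasDerivAt (fun s => A s i j) (A' i j) t) :
    HasDerivAt (fun s => (A s).det)
      (∑ r, ((A t).updateRow r (A' r)).det) t := by
  have hder : HasDerivAt (fun s => (A s).det)
      (∑ σ : Equiv.Perm m, ((Equiv.Perm.sign σ : ℤ) : ℂ) *
        (∑ c, (∏ i ∈ Finset.univ.erase c, A t (σ i) i) * A' (σ c) c)) t := by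
    have hfn : (fun s => (A s).det)
        = fun s => ∑ σ : Equiv.Perm m, ((Equiv.Perm.sign σ : ℤ) : ℂ) * ∏ i, A s (σ i) i := by
      funext s; rw [Matrix.det_apply']
    rw [hfn]
    apply HasDerivAt.fun_sum
    intro σ _
    have hp : HasDerivAt (fun s => ∏ i, A s (σ i) i)
        (∑ c, (∏ i ∈ Finset.univ.erase c, A t (σ i) i) • A' (σ c) c) t :=
      HasDerivAt.fun_finsetProd (fun c _ => h (σ c) c)
    simpa [smul_eq_mul] using hp.const_mul (((Equiv.Perm.sign σ : ℤ) : ℂ))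
  convert hder using 1
  have expand : ∀ (M : Matrix m m ℂ) (v : m → ℂ) (r : m),
      det (updateRow M r v) = ∑ σ : Equiv.Perm m, ((Equiv.Perm.sign σ : ℤ) : ℂ) *
        (v (σ⁻¹ r) * ∏ i ∈ Finset.univ.erase (σ⁻¹ r), M (σ i) i) := by
    intro M v r
    rw [Matrix.det_apply']
    refine Finset.sum_congr rfl fun σ _ => ?_
    congr 1
    rw [← Finset.mul_prod_erase Finset.univ _ (Finset.mem_univ (σ⁻¹ r))]
    congr 1
    · rw [show σ (σ⁻¹ r) = r from Equiv.apply_symm_apply σ r, updateRow_self]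
    · refine Finset.prod_congr rfl fun i hi => ?_
      have hir : σ i ≠ r := by
        intro hh
        exact (Finset.mem_erase.mp hi).1 (by rw [← hh, ← Equiv.Perm.mul_apply, inv_mul_cancel, Equiv.Perm.one_apply])
      rw [updateRow_ne hir]
  simp_rw [expand]
  rw [Finset.sum_comm]
  refine Finset.sum_congr rfl fun σ _ => ?_
  rw [Finset.mul_sum]
  rw [← Equiv.sum_comp σ (fun r => ((Equiv.Perm.sign σ : ℤ) : ℂ) *
    (A' r (σ⁻¹ r) * ∏ i ∈ Finset.univ.erase (σ⁻¹ r), A t (σ i) i))]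
  refine Finset.sum_congr rfl fun c _ => ?_
  rw [← Equiv.Perm.mul_apply, inv_mul_cancel, Equiv.Perm.one_apply]
  ring

/-- The final algebraic assembly of the bilinear identity. -/
lemma assemble {N : ℕ} (M0 : Matrix (Fin N) (Fin N) ℂ) (u1 w1 u2 w2 : Fin N → ℂ)
    (T Txy Tx Ty Tp Tm : ℂ)
    (hT : T = M0.det)
    (hTx : Tx = Bform M0 u1 w1)
    (hTy : Ty = Bform M0 u2 w2)
    (hTxy : Txy = ∑ r, ∑ i, det (updateRow (updateRow M0 r (fun c => u2 r * w2 c)) i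
        (fun c => if i = r then u1 r * w2 c + u2 r * w1 c else u1 i * w1 c)))
    (hTp : Tp = M0.det - Bform M0 u1 w2)
    (hTm : Tm = M0.det - Bform M0 u2 w1) :
    Txy * T - Tx * Ty - T ^ 2 = -(Tp * Tm) := by
  subst hT hTx hTy hTxy hTp hTm
  have hrow2 : ∀ r : Fin N, (fun c => u2 r * w2 c) = u2 r • w2 := by
    intro r; funext c; simp
  have hsplit : ∀ r : Fin N,
      (∑ i, det (updateRow (updateRow M0 r (fun c => u2 r * w2 c)) i
        (fun c => if i = r then u1 r * w2 c + u2 r * w1 c else u1 i * w1 c)))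
      = (det (updateRow M0 r (u1 r • w2)) + det (updateRow M0 r (u2 r • w1)))
        + ∑ i, (if i = r then 0
            else det (updateRow (updateRow M0 r (u2 r • w2)) i (u1 i • w1))) := by
    intro r
    rw [← Finset.sum_erase_add _ _ (Finset.mem_univ r)]
    have hterm : det (updateRow (updateRow M0 r (fun c => u2 r * w2 c)) r
        (fun c => if r = r then u1 r * w2 c + u2 r * w1 c else u1 r * w1 c))
        = det (updateRow M0 r (u1 r • w2)) + det (updateRow M0 r (u2 r • w1)) := by
      rw [myUpdateRow_idem]
      have : (fun c => if r = r then u1 r * w2 c + u2 r * w1 c else u1 r * w1 c)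
          = (u1 r • w2) + (u2 r • w1) := by
        funext c; simp
      rw [this, Matrix.det_updateRow_add]
    have herase : ∑ i ∈ Finset.univ.erase r,
        det (updateRow (updateRow M0 r (fun c => u2 r * w2 c)) i
          (fun c => if i = r then u1 r * w2 c + u2 r * w1 c else u1 i * w1 c))
        = ∑ i, (if i = r then 0
            else det (updateRow (updateRow M0 r (u2 r • w2)) i (u1 i • w1))) := by
      rw [← Finset.sum_erase_add _ _ (Finset.mem_univ r), if_pos rfl, add_zero]
      refine Finset.sum_congr rfl fun i hi => ?_
      have hir : i ≠ r := (Finset.mem_erase.mp hi).1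
      have hv : (fun c => u1 i * w1 c) = u1 i • w1 := by funext c; simp
      simp only [if_neg hir]
      rw [hv, hrow2 r]
    rw [hterm, herase]
    ring
  simp_rw [hsplit]
  rw [Finset.sum_add_distrib, Finset.sum_add_distrib]
  rw [sum_det_updateRow_smul M0 u1 w2, sum_det_updateRow_smul M0 u2 w1]
  have hjac := jacobi M0 u1 w1 u2 w2
  rw [Finset.sum_comm] at hjac
  linear_combination hjac

end DetAlgebra

section DerivLemmas

variable {N : ℕ} (p pb : Fin N → ℂ) (a b : ℂ) (xi0 xib0 : Fin N → ℂ) (n k l : ℤ)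
  (i j : Fin N) (x1 xm1 ta tb : ℝ)

lemma hasDerivAt_ofReal (x : ℝ) : HasDerivAt (fun u : ℝ => (u : ℂ)) 1 x := by
  exact Complex.ofRealCLM.hasDerivAt (x := x)

lemma phifn_x1 :
    HasDerivAt (fun u : ℝ => phifn p a b xi0 n k l i u xm1 ta tb)
      (p i * phifn p a b xi0 n k l i x1 xm1 ta tb) x1 := by
  have h2 : HasDerivAt (fun u : ℝ => xiph p a b xi0 i u xm1 ta tb) (p i) x1 := by
    unfold xiph
    simpa using (((((hasDerivAt_ofReal x1).const_mul (p i)).const_add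
      ((xm1 : ℂ) / p i)).add_const ((ta : ℂ) / (p i - a))).add_const
      ((tb : ℂ) / (p i - b))).add_const (xi0 i)
  unfold phifn
  have h3 := h2.cexp.const_mul (p i ^ n * (p i - a) ^ k * (p i - b) ^ l)
  refine h3.congr_deriv ?_
  ring

lemma phifn_xm1 :
    HasDerivAt (fun v : ℝ => phifn p a b xi0 n k l i x1 v ta tb)
      (phifn p a b xi0 n k l i x1 xm1 ta tb / p i) xm1 := by
  have h2 : HasDerivAt (fun v : ℝ => xiph p a b xi0 i x1 v ta tb) (1 / p i) xm1 := by
    unfold xiph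
    simpa using ((((hasDerivAt_ofReal xm1).div_const (p i)).add_const
      (p i * (x1 : ℂ))).add_const ((ta : ℂ) / (p i - a))).add_const
      ((tb : ℂ) / (p i - b)) |>.add_const (xi0 i)
  unfold phifn
  have h3 := h2.cexp.const_mul (p i ^ n * (p i - a) ^ k * (p i - b) ^ l)
  refine h3.congr_deriv ?_
  field_simp

lemma psifn_x1 :
    HasDerivAt (fun u : ℝ => psifn pb a b xib0 n k l j u xm1 ta tb)
      (pb j * psifn pb a b xib0 n k l j x1 xm1 ta tb) x1 := by
  have h2 : HasDerivAt (fun u : ℝ => xibph pb a b xib0 j u xm1 ta tb) (pb j) x1 := by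
    unfold xibph
    simpa using (((((hasDerivAt_ofReal x1).const_mul (pb j)).const_add
      ((xm1 : ℂ) / pb j)).add_const ((ta : ℂ) / (pb j + a))).add_const
      ((tb : ℂ) / (pb j + b))).add_const (xib0 j)
  unfold psifn
  have h3 := h2.cexp.const_mul ((-1 / pb j) ^ n * (-1 / (pb j + a)) ^ k * (-1 / (pb j + b)) ^ l)
  refine h3.congr_deriv ?_
  ring

lemma psifn_xm1 :
    HasDerivAt (fun v : ℝ => psifn pb a b xib0 n k l j x1 v ta tb)
      (psifn pb a b xib0 n k l j x1 xm1 ta tb / pb j) xm1 := by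
  have h2 : HasDerivAt (fun v : ℝ => xibph pb a b xib0 j x1 v ta tb) (1 / pb j) xm1 := by
    unfold xibph
    simpa using ((((hasDerivAt_ofReal xm1).div_const (pb j)).add_const
      (pb j * (x1 : ℂ))).add_const ((ta : ℂ) / (pb j + a))).add_const
      ((tb : ℂ) / (pb j + b)) |>.add_const (xib0 j)
  unfold psifn
  have h3 := h2.cexp.const_mul ((-1 / pb j) ^ n * (-1 / (pb j + a)) ^ k * (-1 / (pb j + b)) ^ l)
  refine h3.congr_deriv ?_
  field_simp

lemma entry_x1 (hsum : p i + pb j ≠ 0) :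
    HasDerivAt (fun u : ℝ => (if i = j then (1:ℂ) else 0)
        + phifn p a b xi0 n k l i u xm1 ta tb * psifn pb a b xib0 n k l j u xm1 ta tb
          / (p i + pb j))
      (phifn p a b xi0 n k l i x1 xm1 ta tb * psifn pb a b xib0 n k l j x1 xm1 ta tb) x1 := by
  have h := (((phifn_x1 p a b xi0 n k l i x1 xm1 ta tb).mul
    (psifn_x1 pb a b xib0 n k l j x1 xm1 ta tb)).div_const (p i + pb j)).const_add
    (if i = j then (1:ℂ) else 0)
  refine h.congr_deriv ?_
  field_simp

lemma entry_xm1 (hpi : p i ≠ 0) (hpbj : pb j ≠ 0) (hsum : p i + pb j ≠ 0) :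
    HasDerivAt (fun v : ℝ => (if i = j then (1:ℂ) else 0)
        + phifn p a b xi0 n k l i x1 v ta tb * psifn pb a b xib0 n k l j x1 v ta tb
          / (p i + pb j))
      (phifn p a b xi0 n k l i x1 xm1 ta tb / p i
        * (psifn pb a b xib0 n k l j x1 xm1 ta tb / pb j)) xm1 := by
  have h := (((phifn_xm1 p a b xi0 n k l i x1 xm1 ta tb).mul
    (psifn_xm1 pb a b xib0 n k l j x1 xm1 ta tb)).div_const (p i + pb j)).const_add
    (if i = j then (1:ℂ) else 0)
  refine h.congr_deriv ?_
  field_simp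
  ring

lemma prod_x1 (hpi : p i ≠ 0) (hpbj : pb j ≠ 0) :
    HasDerivAt (fun u : ℝ => phifn p a b xi0 n k l i u xm1 ta tb / p i
        * (psifn pb a b xib0 n k l j u xm1 ta tb / pb j))
      (phifn p a b xi0 n k l i x1 xm1 ta tb
          * (psifn pb a b xib0 n k l j x1 xm1 ta tb / pb j)
        + phifn p a b xi0 n k l i x1 xm1 ta tb / p i
          * psifn pb a b xib0 n k l j x1 xm1 ta tb) x1 := by
  have h := ((phifn_x1 p a b xi0 n k l i x1 xm1 ta tb).div_const (p i)).mul
    ((psifn_x1 pb a b xib0 n k l j x1 xm1 ta tb).div_const (pb j))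
  refine h.congr_deriv ?_
  field_simp

end DerivLemmas

section Shifts

variable {N : ℕ} (p pb : Fin N → ℂ) (a b : ℂ) (xi0 xib0 : Fin N → ℂ) (n k l : ℤ)
  (i j : Fin N) (x1 xm1 ta tb : ℝ)

lemma phifn_succ (hpi : p i ≠ 0) :
    phifn p a b xi0 (n+1) k l i x1 xm1 ta tb = p i * phifn p a b xi0 n k l i x1 xm1 ta tb := by
  unfold phifn; rw [zpow_add_one₀ hpi]; ring

lemma phifn_pred (hpi : p i ≠ 0) :
    phifn p a b xi0 (n-1) k l i x1 xm1 ta tb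
      = (p i)⁻¹ * phifn p a b xi0 n k l i x1 xm1 ta tb := by
  unfold phifn; rw [zpow_sub_one₀ hpi]; ring

lemma psifn_succ (hpbj : pb j ≠ 0) :
    psifn pb a b xib0 (n+1) k l j x1 xm1 ta tb
      = (-1 / pb j) * psifn pb a b xib0 n k l j x1 xm1 ta tb := by
  have hne : (-1 : ℂ) / pb j ≠ 0 := div_ne_zero (by norm_num) hpbj
  unfold psifn; rw [zpow_add_one₀ hne]; ring

lemma psifn_pred (hpbj : pb j ≠ 0) :
    psifn pb a b xib0 (n-1) k l j x1 xm1 ta tb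
      = (-(pb j)) * psifn pb a b xib0 n k l j x1 xm1 ta tb := by
  have hne : (-1 : ℂ) / pb j ≠ 0 := div_ne_zero (by norm_num) hpbj
  have hinv : ((-1 : ℂ) / pb j)⁻¹ = -(pb j) := by field_simp
  unfold psifn; rw [zpow_sub_one₀ hne, hinv]; ring

end Shifts

/-- the Gram-type tau functions satisfy the bilinear equation
`((1/2) D_{x_1} D_{x_{-1}} − 1) τ_{nkl}·τ_{nkl} = −τ_{n+1,kl} τ_{n-1,kl}`. -/
theorem kp_bilinear_first (N : ℕ) (hN : 1 ≤ N) (n k l : ℤ)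
    (p pb : Fin N → ℂ) (a b : ℂ) (xi0 xib0 : Fin N → ℂ)
    (hsum : ∀ i j : Fin N, p i + pb j ≠ 0)
    (hp : ∀ i : Fin N, p i ≠ 0 ∧ p i ≠ a ∧ p i ≠ b)
    (hpb : ∀ j : Fin N, pb j ≠ 0 ∧ pb j ≠ -a ∧ pb j ≠ -b) :
    ∀ x1 xm1 ta tb : ℝ,
      deriv (fun u => deriv (fun v => tauf p pb a b xi0 xib0 n k l u v ta tb) xm1) x1
          * tauf p pb a b xi0 xib0 n k l x1 xm1 ta tb
        - deriv (fun u => tauf p pb a b xi0 xib0 n k l u xm1 ta tb) x1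
          * deriv (fun v => tauf p pb a b xi0 xib0 n k l x1 v ta tb) xm1
        - tauf p pb a b xi0 xib0 n k l x1 xm1 ta tb ^ 2
        = -(tauf p pb a b xi0 xib0 (n + 1) k l x1 xm1 ta tb
            * tauf p pb a b xi0 xib0 (n - 1) k l x1 xm1 ta tb) := by
  intro x1 xm1 ta tb
  have hpi : ∀ i, p i ≠ 0 := fun i => (hp i).1
  have hpbj : ∀ j, pb j ≠ 0 := fun j => (hpb j).1
  -- first derivative in x₁
  have hd1 : HasDerivAt (fun u => tauf p pb a b xi0 xib0 n k l u xm1 ta tb)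
      (∑ r, det (updateRow (Matrix.of fun i j : Fin N => (if i = j then (1:ℂ) else 0) + phifn p a b xi0 n k l i x1 xm1 ta tb * psifn pb a b xib0 n k l j x1 xm1 ta tb / (p i + pb j)) r ((Matrix.of fun i c : Fin N => phifn p a b xi0 n k l i x1 xm1 ta tb * psifn pb a b xib0 n k l c x1 xm1 ta tb) r))) x1 :=
    det_hasDerivAt (A := fun u => (Matrix.of fun i j : Fin N => (if i = j then (1:ℂ) else 0) + phifn p a b xi0 n k l i u xm1 ta tb * psifn pb a b xib0 n k l j u xm1 ta tb / (p i + pb j))) (A' := (Matrix.of fun i c : Fin N => phifn p a b xi0 n k l i x1 xm1 ta tb * psifn pb a b xib0 n k l c x1 xm1 ta tb))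
      (fun i j => entry_x1 p pb a b xi0 xib0 n k l i j x1 xm1 ta tb (hsum i j))
  have he1 : (∑ r, det (updateRow (Matrix.of fun i j : Fin N => (if i = j then (1:ℂ) else 0) + phifn p a b xi0 n k l i x1 xm1 ta tb * psifn pb a b xib0 n k l j x1 xm1 ta tb / (p i + pb j)) r ((Matrix.of fun i c : Fin N => phifn p a b xi0 n k l i x1 xm1 ta tb * psifn pb a b xib0 n k l c x1 xm1 ta tb) r)))
      = Bform (Matrix.of fun i j : Fin N => (if i = j then (1:ℂ) else 0) + phifn p a b xi0 n k l i x1 xm1 ta tb * psifn pb a b xib0 n k l j x1 xm1 ta tb / (p i + pb j)) (fun i => phifn p a b xi0 n k l i x1 xm1 ta tb) (fun c => psifn pb a b xib0 n k l c x1 xm1 ta tb) := by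
    rw [← sum_det_updateRow_smul (Matrix.of fun i j : Fin N => (if i = j then (1:ℂ) else 0) + phifn p a b xi0 n k l i x1 xm1 ta tb * psifn pb a b xib0 n k l j x1 xm1 ta tb / (p i + pb j)) (fun i => phifn p a b xi0 n k l i x1 xm1 ta tb) (fun c => psifn pb a b xib0 n k l c x1 xm1 ta tb)]
    exact Finset.sum_congr rfl fun r _ => by congr 1
  have hder1 : deriv (fun u => tauf p pb a b xi0 xib0 n k l u xm1 ta tb) x1
      = Bform (Matrix.of fun i j : Fin N => (if i = j then (1:ℂ) else 0) + phifn p a b xi0 n k l i x1 xm1 ta tb * psifn pb a b xib0 n k l j x1 xm1 ta tb / (p i + pb j)) (fun i => phifn p a b xi0 n k l i x1 xm1 ta tb) (fun c => psifn pb a b xib0 n k l c x1 xm1 ta tb) := hd1.deriv.trans he1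
  -- first derivative in x₋₁
  have hd2 : HasDerivAt (fun v => tauf p pb a b xi0 xib0 n k l x1 v ta tb)
      (∑ r, det (updateRow (Matrix.of fun i j : Fin N => (if i = j then (1:ℂ) else 0) + phifn p a b xi0 n k l i x1 xm1 ta tb * psifn pb a b xib0 n k l j x1 xm1 ta tb / (p i + pb j)) r ((Matrix.of fun i c : Fin N => phifn p a b xi0 n k l i x1 xm1 ta tb / p i * (psifn pb a b xib0 n k l c x1 xm1 ta tb / pb c)) r))) xm1 :=
    det_hasDerivAt (A := fun v => (Matrix.of fun i j : Fin N => (if i = j then (1:ℂ) else 0) + phifn p a b xi0 n k l i x1 v ta tb * psifn pb a b xib0 n k l j x1 v ta tb / (p i + pb j))) (A' := (Matrix.of fun i c : Fin N => phifn p a b xi0 n k l i x1 xm1 ta tb / p i * (psifn pb a b xib0 n k l c x1 xm1 ta tb / pb c)))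
      (fun i j => entry_xm1 p pb a b xi0 xib0 n k l i j x1 xm1 ta tb
        (hpi i) (hpbj j) (hsum i j))
  have he2 : (∑ r, det (updateRow (Matrix.of fun i j : Fin N => (if i = j then (1:ℂ) else 0) + phifn p a b xi0 n k l i x1 xm1 ta tb * psifn pb a b xib0 n k l j x1 xm1 ta tb / (p i + pb j)) r ((Matrix.of fun i c : Fin N => phifn p a b xi0 n k l i x1 xm1 ta tb / p i * (psifn pb a b xib0 n k l c x1 xm1 ta tb / pb c)) r)))
      = Bform (Matrix.of fun i j : Fin N => (if i = j then (1:ℂ) else 0) + phifn p a b xi0 n k l i x1 xm1 ta tb * psifn pb a b xib0 n k l j x1 xm1 ta tb / (p i + pb j)) (fun i => phifn p a b xi0 n k l i x1 xm1 ta tb / p i) (fun c => psifn pb a b xib0 n k l c x1 xm1 ta tb / pb c) := by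
    rw [← sum_det_updateRow_smul (Matrix.of fun i j : Fin N => (if i = j then (1:ℂ) else 0) + phifn p a b xi0 n k l i x1 xm1 ta tb * psifn pb a b xib0 n k l j x1 xm1 ta tb / (p i + pb j)) (fun i => phifn p a b xi0 n k l i x1 xm1 ta tb / p i) (fun c => psifn pb a b xib0 n k l c x1 xm1 ta tb / pb c)]
    exact Finset.sum_congr rfl fun r _ => by congr 1
  have hder2 : deriv (fun v => tauf p pb a b xi0 xib0 n k l x1 v ta tb) xm1
      = Bform (Matrix.of fun i j : Fin N => (if i = j then (1:ℂ) else 0) + phifn p a b xi0 n k l i x1 xm1 ta tb * psifn pb a b xib0 n k l j x1 xm1 ta tb / (p i + pb j)) (fun i => phifn p a b xi0 n k l i x1 xm1 ta tb / p i) (fun c => psifn pb a b xib0 n k l c x1 xm1 ta tb / pb c) := hd2.deriv.trans he2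
  -- inner derivative as a function of u
  have hfun : (fun u => deriv (fun v => tauf p pb a b xi0 xib0 n k l u v ta tb) xm1)
      = fun u => ∑ r, det (updateRow (Matrix.of fun i j : Fin N => (if i = j then (1:ℂ) else 0) + phifn p a b xi0 n k l i u xm1 ta tb * psifn pb a b xib0 n k l j u xm1 ta tb / (p i + pb j)) r ((Matrix.of fun i c : Fin N => phifn p a b xi0 n k l i u xm1 ta tb / p i * (psifn pb a b xib0 n k l c u xm1 ta tb / pb c)) r)) := by
    funext u
    exact (det_hasDerivAt (A := fun v => (Matrix.of fun i j : Fin N => (if i = j then (1:ℂ) else 0) + phifn p a b xi0 n k l i u v ta tb * psifn pb a b xib0 n k l j u v ta tb / (p i + pb j))) (A' := (Matrix.of fun i c : Fin N => phifn p a b xi0 n k l i u xm1 ta tb / p i * (psifn pb a b xib0 n k l c u xm1 ta tb / pb c)))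
      (fun i j => entry_xm1 p pb a b xi0 xib0 n k l i j u xm1 ta tb
        (hpi i) (hpbj j) (hsum i j))).deriv
  -- mixed second derivative
  have hd3 : HasDerivAt (fun u => ∑ r, det (updateRow (Matrix.of fun i j : Fin N => (if i = j then (1:ℂ) else 0) + phifn p a b xi0 n k l i u xm1 ta tb * psifn pb a b xib0 n k l j u xm1 ta tb / (p i + pb j)) r ((Matrix.of fun i c : Fin N => phifn p a b xi0 n k l i u xm1 ta tb / p i * (psifn pb a b xib0 n k l c u xm1 ta tb / pb c)) r)))
      (∑ r, ∑ i, det (updateRow (updateRow (Matrix.of fun i j : Fin N => (if i = j then (1:ℂ) else 0) + phifn p a b xi0 n k l i x1 xm1 ta tb * psifn pb a b xib0 n k l j x1 xm1 ta tb / (p i + pb j)) r ((Matrix.of fun i c : Fin N => phifn p a b xi0 n k l i x1 xm1 ta tb / p i * (psifn pb a b xib0 n k l c x1 xm1 ta tb / pb c)) r)) i ((Matrix.of fun i c : Fin N => if i = r then phifn p a b xi0 n k l r x1 xm1 ta tb * (psifn pb a b xib0 n k l c x1 xm1 ta tb / pb c) + phifn p a b xi0 n k l r x1 xm1 ta tb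 / p r * psifn pb a b xib0 n k l c x1 xm1 ta tb else phifn p a b xi0 n k l i x1 xm1 ta tb * psifn pb a b xib0 n k l c x1 xm1 ta tb) i))) x1 := by
    apply HasDerivAt.fun_sum
    intro r _
    refine det_hasDerivAt (A := fun u => updateRow (Matrix.of fun i j : Fin N => (if i = j then (1:ℂ) else 0) + phifn p a b xi0 n k l i u xm1 ta tb * psifn pb a b xib0 n k l j u xm1 ta tb / (p i + pb j)) r ((Matrix.of fun i c : Fin N => phifn p a b xi0 n k l i u xm1 ta tb / p i * (psifn pb a b xib0 n k l c u xm1 ta tb / pb c)) r))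
      (A' := (Matrix.of fun i c : Fin N => if i = r then phifn p a b xi0 n k l r x1 xm1 ta tb * (psifn pb a b xib0 n k l c x1 xm1 ta tb / pb c) + phifn p a b xi0 n k l r x1 xm1 ta tb / p r * psifn pb a b xib0 n k l c x1 xm1 ta tb else phifn p a b xi0 n k l i x1 xm1 ta tb * psifn pb a b xib0 n k l c x1 xm1 ta tb)) ?_
    intro i c
    have heq : (fun u => updateRow (Matrix.of fun i j : Fin N => (if i = j then (1:ℂ) else 0) + phifn p a b xi0 n k l i u xm1 ta tb * psifn pb a b xib0 n k l j u xm1 ta tb / (p i + pb j)) r ((Matrix.of fun i c : Fin N => phifn p a b xi0 n k l i u xm1 ta tb / p i * (psifn pb a b xib0 n k l c u xm1 ta tb / pb c)) r) i c)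
        = fun u => if i = r then (Matrix.of fun i c : Fin N => phifn p a b xi0 n k l i u xm1 ta tb / p i * (psifn pb a b xib0 n k l c u xm1 ta tb / pb c)) i c else (Matrix.of fun i j : Fin N => (if i = j then (1:ℂ) else 0) + phifn p a b xi0 n k l i u xm1 ta tb * psifn pb a b xib0 n k l j u xm1 ta tb / (p i + pb j)) i c := by
      funext u
      rw [Matrix.updateRow_apply]
      by_cases hir : i = r
      · subst hir; simp
      · simp [hir]
    rw [heq]
    by_cases hir : i = r
    · subst hir
      simp only [if_pos rfl]
      have h := prod_x1 p pb a b xi0 xib0 n k l i c x1 xm1 ta tb (hpi i) (hpbj c)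
      simpa [Matrix.of_apply] using h
    · simp only [if_neg hir]
      have h := entry_x1 p pb a b xi0 xib0 n k l i c x1 xm1 ta tb (hsum i c)
      simpa [Matrix.of_apply, hir] using h
  -- shifted tau functions
  have htauP : tauf p pb a b xi0 xib0 (n+1) k l x1 xm1 ta tb
      = det (Matrix.of fun i j : Fin N => (if i = j then (1:ℂ) else 0) + phifn p a b xi0 n k l i x1 xm1 ta tb * psifn pb a b xib0 n k l j x1 xm1 ta tb / (p i + pb j)) - Bform (Matrix.of fun i j : Fin N => (if i = j then (1:ℂ) else 0) + phifn p a b xi0 n k l i x1 xm1 ta tb * psifn pb a b xib0 n k l j x1 xm1 ta tb / (p i + pb j)) (fun i => phifn p a b xi0 n k l i x1 xm1 ta tb) (fun c => psifn pb a b xib0 n k l c x1 xm1 ta tb / pb c) := by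
    have hmat : (Matrix.of fun i j : Fin N => (if i = j then (1:ℂ) else 0) + phifn p a b xi0 (n+1) k l i x1 xm1 ta tb * psifn pb a b xib0 (n+1) k l j x1 xm1 ta tb / (p i + pb j))
        = (Matrix.of fun i j : Fin N => (if i = j then (1:ℂ) else 0) + phifn p a b xi0 n k l i x1 xm1 ta tb * psifn pb a b xib0 n k l j x1 xm1 ta tb / (p i + pb j)) + vecMulVec (fun i => phifn p a b xi0 n k l i x1 xm1 ta tb) (fun c => -(psifn pb a b xib0 n k l c x1 xm1 ta tb / pb c)) := by
      ext i j
      simp only [Matrix.of_apply, Matrix.add_apply, vecMulVec_apply,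
        phifn_succ p a b xi0 n k l i x1 xm1 ta tb (hpi i),
        psifn_succ pb a b xib0 n k l j x1 xm1 ta tb (hpbj j)]
      by_cases hij : i = j
      · simp only [if_pos hij]
        field_simp [hpbj j, hsum i j]
        ring
      · simp only [if_neg hij]
        field_simp [hpbj j, hsum i j]
        ring
    calc tauf p pb a b xi0 xib0 (n+1) k l x1 xm1 ta tb
        = det ((Matrix.of fun i j : Fin N => (if i = j then (1:ℂ) else 0) + phifn p a b xi0 n k l i x1 xm1 ta tb * psifn pb a b xib0 n k l j x1 xm1 ta tb / (p i + pb j)) + vecMulVec (fun i => phifn p a b xi0 n k l i x1 xm1 ta tb) (fun c => -(psifn pb a b xib0 n k l c x1 xm1 ta tb / pb c))) := by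
          rw [show tauf p pb a b xi0 xib0 (n+1) k l x1 xm1 ta tb
            = det (Matrix.of fun i j : Fin N => (if i = j then (1:ℂ) else 0) + phifn p a b xi0 (n+1) k l i x1 xm1 ta tb * psifn pb a b xib0 (n+1) k l j x1 xm1 ta tb / (p i + pb j)) from rfl, hmat]
      _ = det (Matrix.of fun i j : Fin N => (if i = j then (1:ℂ) else 0) + phifn p a b xi0 n k l i x1 xm1 ta tb * psifn pb a b xib0 n k l j x1 xm1 ta tb / (p i + pb j)) + Bform (Matrix.of fun i j : Fin N => (if i = j then (1:ℂ) else 0) + phifn p a b xi0 n k l i x1 xm1 ta tb * psifn pb a b xib0 n k l j x1 xm1 ta tb / (p i + pb j)) (fun i => phifn p a b xi0 n k l i x1 xm1 ta tb) (fun c => -(psifn pb a b xib0 n k l c x1 xm1 ta tb / pb c)) := det_add_vecMulVec _ _ _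
      _ = det (Matrix.of fun i j : Fin N => (if i = j then (1:ℂ) else 0) + phifn p a b xi0 n k l i x1 xm1 ta tb * psifn pb a b xib0 n k l j x1 xm1 ta tb / (p i + pb j)) - Bform (Matrix.of fun i j : Fin N => (if i = j then (1:ℂ) else 0) + phifn p a b xi0 n k l i x1 xm1 ta tb * psifn pb a b xib0 n k l j x1 xm1 ta tb / (p i + pb j)) (fun i => phifn p a b xi0 n k l i x1 xm1 ta tb) (fun c => psifn pb a b xib0 n k l c x1 xm1 ta tb / pb c) := by
          rw [Bform_neg_right (Matrix.of fun i j : Fin N => (if i = j then (1:ℂ) else 0) + phifn p a b xi0 n k l i x1 xm1 ta tb * psifn pb a b xib0 n k l j x1 xm1 ta tb / (p i + pb j)) (fun i => phifn p a b xi0 n k l i x1 xm1 ta tb) (fun c => psifn pb a b xib0 n k l c x1 xm1 ta tb / pb c)]; ring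
  have htauM : tauf p pb a b xi0 xib0 (n-1) k l x1 xm1 ta tb
      = det (Matrix.of fun i j : Fin N => (if i = j then (1:ℂ) else 0) + phifn p a b xi0 n k l i x1 xm1 ta tb * psifn pb a b xib0 n k l j x1 xm1 ta tb / (p i + pb j)) - Bform (Matrix.of fun i j : Fin N => (if i = j then (1:ℂ) else 0) + phifn p a b xi0 n k l i x1 xm1 ta tb * psifn pb a b xib0 n k l j x1 xm1 ta tb / (p i + pb j)) (fun i => phifn p a b xi0 n k l i x1 xm1 ta tb / p i) (fun c => psifn pb a b xib0 n k l c x1 xm1 ta tb) := by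
    have hmat : (Matrix.of fun i j : Fin N => (if i = j then (1:ℂ) else 0) + phifn p a b xi0 (n-1) k l i x1 xm1 ta tb * psifn pb a b xib0 (n-1) k l j x1 xm1 ta tb / (p i + pb j))
        = (Matrix.of fun i j : Fin N => (if i = j then (1:ℂ) else 0) + phifn p a b xi0 n k l i x1 xm1 ta tb * psifn pb a b xib0 n k l j x1 xm1 ta tb / (p i + pb j)) + vecMulVec (fun i => phifn p a b xi0 n k l i x1 xm1 ta tb / p i) (fun c => -(psifn pb a b xib0 n k l c x1 xm1 ta tb)) := by
      ext i j
      simp only [Matrix.of_apply, Matrix.add_apply, vecMulVec_apply,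
        phifn_pred p a b xi0 n k l i x1 xm1 ta tb (hpi i),
        psifn_pred pb a b xib0 n k l j x1 xm1 ta tb (hpbj j)]
      by_cases hij : i = j
      · simp only [if_pos hij]
        field_simp [hpi i, hsum i j]
        ring
      · simp only [if_neg hij]
        field_simp [hpi i, hsum i j]
        ring
    calc tauf p pb a b xi0 xib0 (n-1) k l x1 xm1 ta tb
        = det ((Matrix.of fun i j : Fin N => (if i = j then (1:ℂ) else 0) + phifn p a b xi0 n k l i x1 xm1 ta tb * psifn pb a b xib0 n k l j x1 xm1 ta tb / (p i + pb j)) + vecMulVec (fun i => phifn p a b xi0 n k l i x1 xm1 ta tb / p i) (fun c => -(psifn pb a b xib0 n k l c x1 xm1 ta tb))) := by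
          rw [show tauf p pb a b xi0 xib0 (n-1) k l x1 xm1 ta tb
            = det (Matrix.of fun i j : Fin N => (if i = j then (1:ℂ) else 0) + phifn p a b xi0 (n-1) k l i x1 xm1 ta tb * psifn pb a b xib0 (n-1) k l j x1 xm1 ta tb / (p i + pb j)) from rfl, hmat]
      _ = det (Matrix.of fun i j : Fin N => (if i = j then (1:ℂ) else 0) + phifn p a b xi0 n k l i x1 xm1 ta tb * psifn pb a b xib0 n k l j x1 xm1 ta tb / (p i + pb j)) + Bform (Matrix.of fun i j : Fin N => (if i = j then (1:ℂ) else 0) + phifn p a b xi0 n k l i x1 xm1 ta tb * psifn pb a b xib0 n k l j x1 xm1 ta tb / (p i + pb j)) (fun i => phifn p a b xi0 n k l i x1 xm1 ta tb / p i) (fun c => -(psifn pb a b xib0 n k l c x1 xm1 ta tb)) := det_add_vecMulVec _ _ _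
      _ = det (Matrix.of fun i j : Fin N => (if i = j then (1:ℂ) else 0) + phifn p a b xi0 n k l i x1 xm1 ta tb * psifn pb a b xib0 n k l j x1 xm1 ta tb / (p i + pb j)) - Bform (Matrix.of fun i j : Fin N => (if i = j then (1:ℂ) else 0) + phifn p a b xi0 n k l i x1 xm1 ta tb * psifn pb a b xib0 n k l j x1 xm1 ta tb / (p i + pb j)) (fun i => phifn p a b xi0 n k l i x1 xm1 ta tb / p i) (fun c => psifn pb a b xib0 n k l c x1 xm1 ta tb) := by
          rw [Bform_neg_right (Matrix.of fun i j : Fin N => (if i = j then (1:ℂ) else 0) + phifn p a b xi0 n k l i x1 xm1 ta tb * psifn pb a b xib0 n k l j x1 xm1 ta tb / (p i + pb j)) (fun i => phifn p a b xi0 n k l i x1 xm1 ta tb / p i) (fun c => psifn pb a b xib0 n k l c x1 xm1 ta tb)]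
          ring
  rw [hfun, hd3.deriv, hder1, hder2, htauP, htauM]
  exact assemble (Matrix.of fun i j : Fin N => (if i = j then (1:ℂ) else 0) + phifn p a b xi0 n k l i x1 xm1 ta tb * psifn pb a b xib0 n k l j x1 xm1 ta tb / (p i + pb j)) (fun i => phifn p a b xi0 n k l i x1 xm1 ta tb) (fun c => psifn pb a b xib0 n k l c x1 xm1 ta tb) (fun i => phifn p a b xi0 n k l i x1 xm1 ta tb / p i) (fun c => psifn pb a b xib0 n k l c x1 xm1 ta tb / pb c)
    (tauf p pb a b xi0 xib0 n k l x1 xm1 ta tb) _ _ _ _ _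
    rfl rfl rfl rfl rfl rfl
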